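/- Let ψ ∈ L²(ℝ²) and let j ≥ 0 be an integer. Suppose the family {D_{2^j} (T^t_{(k,l)})^{2^{-2j}} ψ : k, l ∈ ℤ} is orthonormal in L²(ℝ²), and let W be its closed linear span. Then the family {T^t_{(k',l')} D_{2^j} (T^t_{(k,l)})^{2^{-2j}} ψ : k', l' ∈ ℤ, k, l ∈ {0, ..., 2^j − 1}} is a Parseval frame for W: for every f ∈ W, ‖f‖²_{L²(ℝ²)} = Σ_{k',l'∈ℤ} Σ_{k,l=0}^{2^j−1} |⟨f, T^t_{(k',l')} D_{2^j} (T^t_{(k,l)})^{2^{-2j}} ψ⟩|². -/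

import Mathlib

open MeasureTheory Complex

noncomputable section

/-- The `λ`-twisted translation `(T^t_{(k,l)})^λ f (x,y) = e^{πiλ(xl - yk)} f(x-k, y-l)`. -/
def twistedTranslate (lam : ℝ) (k l : ℤ) (f : ℝ × ℝ → ℂ) : ℝ × ℝ → ℂ :=
  fun p => Complex.exp ((↑(Real.pi * lam * (p.1 * l - p.2 * k)) : ℂ) * Complex.I) *
    f (p.1 - k, p.2 - l)

/-- The dilation `D_a f (x,y) = a f(ax, ay)`. -/
def dilate (a : ℝ) (f : ℝ × ℝ → ℂ) : ℝ × ℝ → ℂ :=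
  fun p => (a : ℂ) * f (a * p.1, a * p.2)

/-- The kernel `K^λ_g(ξ,η) = ∫_ℝ g(x, η-ξ) e^{πiλx(η+ξ)} dx` of the Weyl transform `W_λ(g)`. -/
def weylKernel (lam : ℝ) (g : ℝ × ℝ → ℂ) (ξ η : ℝ) : ℂ :=
  ∫ x : ℝ, g (x, η - ξ) * Complex.exp ((↑(Real.pi * lam * x * (η + ξ)) : ℂ) * Complex.I)


lemma key_fun (lam a : ℝ) (h : lam * (a * a) = 1) (k' l' k l K L : ℤ)
    (hK : (K : ℝ) = a * k' + k) (hL : (L : ℝ) = a * l' + l) (g : ℝ × ℝ → ℂ) :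
    twistedTranslate 1 k' l' (dilate a (twistedTranslate lam k l g)) =
      fun p => Complex.exp ((↑(Real.pi * (lam * a) * (l' * k - k' * l)) : ℂ) * Complex.I) *
        dilate a (twistedTranslate lam K L g) p := by
  funext p
  obtain ⟨x, y⟩ := p
  simp only [twistedTranslate, dilate]
  have harg1 : a * (x - ↑k') - ↑k = a * x - ↑K := by rw [hK]; ring
  have harg2 : a * (y - ↑l') - ↑l = a * y - ↑L := by rw [hL]; ring
  rw [harg1, harg2]
  rw [show ∀ A B C : ℂ, A * ((a:ℂ) * (B * C)) = (A * B) * ((a:ℂ) * C) from by intros; ring,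
    show ∀ A B C : ℂ, A * ((a:ℂ) * (B * C)) = (A * B) * ((a:ℂ) * C) from by intros; ring,
    ← Complex.exp_add, ← Complex.exp_add, ← add_mul, ← add_mul,
    ← Complex.ofReal_add, ← Complex.ofReal_add]
  congr 4
  rw [hK, hL]
  linear_combination (Real.pi * ((y:ℝ) * k' - x * l')) * h

lemma twistedTranslate_congr_ae (lam : ℝ) (k l : ℤ) {f g : ℝ × ℝ → ℂ}
    (h : f =ᵐ[volume] g) :
    twistedTranslate lam k l f =ᵐ[volume] twistedTranslate lam k l g := by
  have hqmp := (measurePreserving_sub_right (volume : Measure (ℝ × ℝ))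
    ((k : ℝ), (l : ℝ))).quasiMeasurePreserving
  have h2 : (f ∘ fun p : ℝ × ℝ => p - ((k : ℝ), (l : ℝ))) =ᵐ[volume]
      (g ∘ fun p : ℝ × ℝ => p - ((k : ℝ), (l : ℝ))) := hqmp.ae_eq_comp h
  filter_upwards [h2] with p hp
  simp only [twistedTranslate]
  have : f (p.1 - k, p.2 - l) = g (p.1 - k, p.2 - l) := by
    simpa [Function.comp, Prod.sub_def] using hp
  rw [this]

lemma dilate_qmp {a : ℝ} (ha : a ≠ 0) :
    Measure.QuasiMeasurePreserving (fun p : ℝ × ℝ => a • p) volume volume := by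
  refine ⟨by fun_prop, ?_⟩
  rw [Measure.map_addHaar_smul volume ha]
  exact Measure.smul_absolutelyContinuous

lemma dilate_congr_ae {a : ℝ} (ha : a ≠ 0) {f g : ℝ × ℝ → ℂ}
    (h : f =ᵐ[volume] g) : dilate a f =ᵐ[volume] dilate a g := by
  have h2 : (f ∘ fun p : ℝ × ℝ => a • p) =ᵐ[volume] (g ∘ fun p : ℝ × ℝ => a • p) :=
    (dilate_qmp ha).ae_eq_comp h
  filter_upwards [h2] with p hp
  simp only [dilate]
  have : f (a * p.1, a * p.2) = g (a * p.1, a * p.2) := by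
    simpa [Function.comp, Prod.smul_def, smul_eq_mul] using hp
  rw [this]

lemma memℒp_unimodular_mul {e f : ℝ × ℝ → ℂ} (he : AEStronglyMeasurable e volume)
    (hnorm : ∀ x, ‖e x‖ = 1) (hf : MemLp f 2 (volume : Measure (ℝ × ℝ))) :
    MemLp (fun x => e x * f x) 2 volume := by
  refine ⟨he.mul hf.1, ?_⟩
  have h : eLpNorm (fun x => e x * f x) 2 volume = eLpNorm f 2 volume := by
    apply eLpNorm_congr_norm_ae
    filter_upwards with x
    rw [norm_mul, hnorm x, one_mul]
  rw [h]; exact hf.2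

lemma memℒp_twistedTranslate (lam : ℝ) (k l : ℤ) {f : ℝ × ℝ → ℂ}
    (hf : MemLp f 2 (volume : Measure (ℝ × ℝ))) :
    MemLp (twistedTranslate lam k l f) 2 volume := by
  have hmp : MeasurePreserving (fun p : ℝ × ℝ => p - ((k : ℝ), (l : ℝ))) volume volume :=
    measurePreserving_sub_right volume _
  have h2 : MemLp (fun p : ℝ × ℝ => f (p.1 - k, p.2 - l)) 2 volume := by
    have := hf.comp_measurePreserving hmp
    simpa [Function.comp_def, Prod.sub_def] using this
  have he : AEStronglyMeasurable (fun p : ℝ × ℝ =>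
      Complex.exp ((↑(Real.pi * lam * (p.1 * l - p.2 * k)) : ℂ) * Complex.I)) volume := by
    apply Continuous.aestronglyMeasurable
    fun_prop
  exact memℒp_unimodular_mul he (fun x => by simp [Complex.norm_exp]) h2

lemma memℒp_dilate {a : ℝ} (ha : a ≠ 0) {f : ℝ × ℝ → ℂ}
    (hf : MemLp f 2 (volume : Measure (ℝ × ℝ))) :
    MemLp (dilate a f) 2 volume := by
  have hmap : Measure.map (fun p : ℝ × ℝ => a • p) (volume : Measure (ℝ × ℝ)) =
      ENNReal.ofReal |(a ^ Module.finrank ℝ (ℝ × ℝ))⁻¹| • volume :=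
    Measure.map_addHaar_smul volume ha
  have hmem : MemLp f 2 (Measure.map (fun p : ℝ × ℝ => a • p) (volume : Measure (ℝ × ℝ))) := by
    rw [hmap]
    exact hf.smul_measure (by finiteness)
  have hcomp : MemLp (f ∘ fun p : ℝ × ℝ => a • p) 2 (volume : Measure (ℝ × ℝ)) :=
    (memLp_map_measure_iff hmem.1 (by fun_prop)).mp hmem
  have h : MemLp (fun p : ℝ × ℝ => f (a * p.1, a * p.2)) 2 volume := hcomp
  exact h.const_mul (a : ℂ)

/-- The twisted translation as an operator on `L²(ℝ²)`. -/
def twistedTranslateLp (lam : ℝ) (k l : ℤ) (f : Lp ℂ 2 (volume : Measure (ℝ × ℝ))) :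
    Lp ℂ 2 (volume : Measure (ℝ × ℝ)) :=
  (memℒp_twistedTranslate lam k l (Lp.memLp f)).toLp _

/-- The dilation as an operator on `L²(ℝ²)` (with junk value `0` for `a = 0`). -/
def dilateLp (a : ℝ) (f : Lp ℂ 2 (volume : Measure (ℝ × ℝ))) :
    Lp ℂ 2 (volume : Measure (ℝ × ℝ)) :=
  if ha : a = 0 then 0 else (memℒp_dilate ha (Lp.memLp f)).toLp _


lemma coeFn_twistedTranslateLp (lam : ℝ) (k l : ℤ) (F : Lp ℂ 2 (volume : Measure (ℝ × ℝ))) :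
    (twistedTranslateLp lam k l F : ℝ × ℝ → ℂ) =ᵐ[volume] twistedTranslate lam k l F :=
  MemLp.coeFn_toLp _

lemma coeFn_dilateLp {a : ℝ} (ha : a ≠ 0) (F : Lp ℂ 2 (volume : Measure (ℝ × ℝ))) :
    (dilateLp a F : ℝ × ℝ → ℂ) =ᵐ[volume] dilate a F := by
  rw [dilateLp, dif_neg ha]
  exact MemLp.coeFn_toLp _

lemma key_Lp (lam a : ℝ) (ha : a ≠ 0) (h : lam * (a * a) = 1) (k' l' k l K L : ℤ)
    (hK : (K : ℝ) = a * k' + k) (hL : (L : ℝ) = a * l' + l)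
    (F : Lp ℂ 2 (volume : Measure (ℝ × ℝ))) :
    twistedTranslateLp 1 k' l' (dilateLp a (twistedTranslateLp lam k l F)) =
      Complex.exp ((↑(Real.pi * (lam * a) * (l' * k - k' * l)) : ℂ) * Complex.I) •
        dilateLp a (twistedTranslateLp lam K L F) := by
  set c : ℂ := Complex.exp ((↑(Real.pi * (lam * a) * (l' * k - k' * l)) : ℂ) * Complex.I) with hc
  apply Lp.ext
  have h2 : (dilateLp a (twistedTranslateLp lam k l F) : ℝ × ℝ → ℂ) =ᵐ[volume]
      dilate a (twistedTranslate lam k l F) :=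
    (coeFn_dilateLp ha _).trans (dilate_congr_ae ha (coeFn_twistedTranslateLp lam k l F))
  have h3 : (twistedTranslateLp 1 k' l' (dilateLp a (twistedTranslateLp lam k l F)) :
        ℝ × ℝ → ℂ) =ᵐ[volume]
      twistedTranslate 1 k' l' (dilate a (twistedTranslate lam k l F)) :=
    (coeFn_twistedTranslateLp _ _ _ _).trans (twistedTranslate_congr_ae _ _ _ h2)
  rw [key_fun lam a h k' l' k l K L hK hL] at h3
  have h4 : (dilateLp a (twistedTranslateLp lam K L F) : ℝ × ℝ → ℂ) =ᵐ[volume]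
      dilate a (twistedTranslate lam K L F) :=
    (coeFn_dilateLp ha _).trans (dilate_congr_ae ha (coeFn_twistedTranslateLp lam K L F))
  have h5 : ((c • dilateLp a (twistedTranslateLp lam K L F) :
        Lp ℂ 2 (volume : Measure (ℝ × ℝ))) : ℝ × ℝ → ℂ) =ᵐ[volume]
      fun p => c * dilate a (twistedTranslate lam K L F) p := by
    filter_upwards [Lp.coeFn_smul c (dilateLp a (twistedTranslateLp lam K L F)), h4] with p hp1 hp2
    rw [hp1, Pi.smul_apply, hp2, smul_eq_mul]
  exact h3.trans h5.symm

open scoped ComplexInnerProductSpace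

/-- For `ψ ∈ L²(ℝ²)` and an integer `j ≥ 0`, if the family
`{D_{2^j} (T^t_{(k,l)})^{2^{-2j}} ψ : k, l ∈ ℤ}` is orthonormal in `L²(ℝ²)` with closed linear
span `W`, then `{T^t_{(k',l')} D_{2^j} (T^t_{(k,l)})^{2^{-2j}} ψ : k', l' ∈ ℤ,
k, l ∈ {0, ..., 2^j - 1}}` is a Parseval frame for `W`. -/
theorem statement_8 (ψ : ℝ × ℝ → ℂ) (hψ : MemLp ψ 2 (volume : Measure (ℝ × ℝ))) (j : ℕ)
    (horth : Orthonormal ℂ (fun kl : ℤ × ℤ =>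
      dilateLp ((2 : ℝ) ^ j) (twistedTranslateLp ((2 : ℝ) ^ (-(2 * (j : ℤ)))) kl.1 kl.2
        (hψ.toLp ψ))))
    (W : Submodule ℂ (Lp ℂ 2 (volume : Measure (ℝ × ℝ))))
    (hW : W = (Submodule.span ℂ (Set.range fun kl : ℤ × ℤ =>
      dilateLp ((2 : ℝ) ^ j) (twistedTranslateLp ((2 : ℝ) ^ (-(2 * (j : ℤ)))) kl.1 kl.2
        (hψ.toLp ψ)))).topologicalClosure) :
    ∀ f ∈ W, ‖f‖ ^ 2 = ∑' q : (ℤ × ℤ) × Fin (2 ^ j) × Fin (2 ^ j),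
      ‖⟪f, twistedTranslateLp 1 q.1.1 q.1.2
          (dilateLp ((2 : ℝ) ^ j) (twistedTranslateLp ((2 : ℝ) ^ (-(2 * (j : ℤ))))
            ((q.2.1 : ℕ) : ℤ) ((q.2.2 : ℕ) : ℤ) (hψ.toLp ψ)))⟫‖ ^ 2 := by
  classical
  haveI : NeZero ((2:ℕ) ^ j) := ⟨pow_ne_zero _ two_ne_zero⟩
  set lam : ℝ := (2 : ℝ) ^ (-(2 * (j : ℤ))) with hlam
  set a : ℝ := (2 : ℝ) ^ j with haa
  have ha : a ≠ 0 := by rw [haa]; positivity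
  have hna : (((2:ℕ) ^ j : ℕ) : ℝ) = a := by rw [haa]; push_cast; ring
  have hla : lam * (a * a) = 1 := by
    have h2 : (2:ℝ) ≠ 0 := two_ne_zero
    rw [hlam, haa, ← zpow_natCast (2:ℝ) j, ← zpow_add₀ h2, ← zpow_add₀ h2]
    have : -(2 * (j:ℤ)) + ((j:ℤ) + (j:ℤ)) = 0 := by ring
    rw [this, zpow_zero]
  set e : ℤ × ℤ → Lp ℂ 2 (volume : Measure (ℝ × ℝ)) := fun kl =>
    dilateLp a (twistedTranslateLp lam kl.1 kl.2 (hψ.toLp ψ)) with he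
  have horthe : Orthonormal ℂ e := horth
  set e' : (ℤ × ℤ) × Fin (2 ^ j) × Fin (2 ^ j) → Lp ℂ 2 (volume : Measure (ℝ × ℝ)) :=
    fun q => twistedTranslateLp 1 q.1.1 q.1.2
      (dilateLp a (twistedTranslateLp lam ((q.2.1 : ℕ) : ℤ) ((q.2.2 : ℕ) : ℤ)
        (hψ.toLp ψ))) with he'
  set Ψe : ((ℤ × ℤ) × Fin (2 ^ j) × Fin (2 ^ j)) ≃ (ℤ × ℤ) :=
    (Equiv.prodProdProdComm ℤ (Fin (2 ^ j)) ℤ (Fin (2 ^ j))).symm.trans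
      (Equiv.prodCongr (Int.divModEquiv (2 ^ j)).symm (Int.divModEquiv (2 ^ j)).symm) with hΨ
  have hΨapp : ∀ q : (ℤ × ℤ) × Fin (2 ^ j) × Fin (2 ^ j),
      Ψe q = (q.1.1 * ((2:ℕ) ^ j : ℤ) + ((q.2.1 : ℕ) : ℤ),
        q.1.2 * ((2:ℕ) ^ j : ℤ) + ((q.2.2 : ℕ) : ℤ)) := by
    intro q
    simp [hΨ, Equiv.prodProdProdComm, Int.divModEquiv]
  set c : (ℤ × ℤ) × Fin (2 ^ j) × Fin (2 ^ j) → ℂ := fun q =>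
    Complex.exp ((↑(Real.pi * (lam * a) *
      ((q.1.2 : ℝ) * (((q.2.1 : ℕ) : ℤ) : ℝ) - (q.1.1 : ℝ) * (((q.2.2 : ℕ) : ℤ) : ℝ))) : ℂ) *
      Complex.I) with hc
  have hc0 : ∀ q, c q ≠ 0 := fun q => Complex.exp_ne_zero _
  have hcnorm : ∀ q, ‖c q‖ = 1 := fun q => by
    rw [hc]; exact Complex.norm_exp_ofReal_mul_I _
  have hkey : ∀ q, e' q = c q • e (Ψe q) := by
    intro q
    rw [he', hΨapp q, hc]
    exact key_Lp lam a ha hla q.1.1 q.1.2 ((q.2.1 : ℕ) : ℤ) ((q.2.2 : ℕ) : ℤ) _ _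
      (by push_cast [← hna]; ring) (by push_cast [← hna]; ring) (hψ.toLp ψ)
  have horth' : Orthonormal ℂ e' := by
    rw [orthonormal_iff_ite] at horthe ⊢
    intro i k
    rw [hkey i, hkey k, inner_smul_left, inner_smul_right, horthe]
    by_cases hik : i = k
    · subst hik
      rw [if_pos rfl, mul_one, mul_comm, Complex.mul_conj]
      have h1 : Complex.normSq (c i) = 1 := by
        have := hcnorm i
        rw [Complex.normSq_eq_norm_sq, this, one_pow]
      rw [h1, Complex.ofReal_one, if_pos rfl]
    · have hne : Ψe i ≠ Ψe k := fun h => hik (Ψe.injective h)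
      simp [hik, hne]
  have hspan : Submodule.span ℂ (Set.range e') = Submodule.span ℂ (Set.range e) := by
    apply le_antisymm
    · rw [Submodule.span_le]
      rintro _ ⟨q, rfl⟩
      rw [hkey q]
      exact Submodule.smul_mem _ _ (Submodule.subset_span ⟨Ψe q, rfl⟩)
    · rw [Submodule.span_le]
      rintro _ ⟨kl, rfl⟩
      obtain ⟨q, rfl⟩ : ∃ q, Ψe q = kl := ⟨Ψe.symm kl, Ψe.apply_symm_apply kl⟩
      have hq : e (Ψe q) = (c q)⁻¹ • e' q := by
        rw [hkey q, smul_smul, inv_mul_cancel₀ (hc0 q), one_smul]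
      rw [hq]
      exact Submodule.smul_mem _ _ (Submodule.subset_span ⟨q, rfl⟩)
  have hWe : W = (Submodule.span ℂ (Set.range e)).topologicalClosure := hW
  have hW' : W = (Submodule.span ℂ (Set.range e')).topologicalClosure := by
    rw [hWe, hspan]
  have he'W : ∀ q, e' q ∈ W := fun q => by
    rw [hW']
    exact Submodule.le_topologicalClosure _ (Submodule.subset_span ⟨q, rfl⟩)
  have hWclosed : IsClosed (W : Set (Lp ℂ 2 (volume : Measure (ℝ × ℝ)))) := by
    rw [hW']
    exact Submodule.isClosed_topologicalClosure _
  haveI : CompleteSpace W := hWclosed.completeSpace_coe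
  set b : (ℤ × ℤ) × Fin (2 ^ j) × Fin (2 ^ j) → W := fun q => ⟨e' q, he'W q⟩ with hb
  have horthb : Orthonormal ℂ b := by
    rw [orthonormal_iff_ite] at horth' ⊢
    intro i k
    rw [← horth' i k]
    rfl
  have hdense : ⊤ ≤ (Submodule.span ℂ (Set.range b)).topologicalClosure := by
    intro w _
    have himg : (Subtype.val '' ((Submodule.span ℂ (Set.range b) : Submodule ℂ W) :
        Set W)) = ((Submodule.span ℂ (Set.range e') :
          Submodule ℂ (Lp ℂ 2 (volume : Measure (ℝ × ℝ)))) : Set _) := by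
      have h1 : Submodule.map W.subtype (Submodule.span ℂ (Set.range b)) =
          Submodule.span ℂ (Set.range e') := by
        rw [Submodule.map_span]
        congr 1
        rw [← Set.range_comp]
        rfl
      rw [← h1]
      rfl
    have hmemc : (w : Lp ℂ 2 (volume : Measure (ℝ × ℝ))) ∈
        closure (Subtype.val '' ((Submodule.span ℂ (Set.range b) : Submodule ℂ W) : Set W)) := by
      rw [himg, ← Submodule.topologicalClosure_coe, ← hW']
      exact w.2
    have hmem : w ∈ closure ((Submodule.span ℂ (Set.range b) : Submodule ℂ W) : Set W) := by
      rw [Topology.IsInducing.subtypeVal.closure_eq_preimage_closure_image]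
      exact hmemc
    have : w ∈ (((Submodule.span ℂ (Set.range b)).topologicalClosure : Submodule ℂ W) :
        Set W) := by
      rw [Submodule.topologicalClosure_coe]
      exact hmem
    exact this
  set B : HilbertBasis ((ℤ × ℤ) × Fin (2 ^ j) × Fin (2 ^ j)) ℂ W :=
    HilbertBasis.mk horthb hdense with hB
  intro f hf
  set w : W := ⟨f, hf⟩ with hw
  have hrepr : ∀ q, B.repr w q = ⟪e' q, f⟫ := by
    intro q
    rw [hB, HilbertBasis.repr_apply_apply, HilbertBasis.coe_mk]
    rfl
  have hP : ‖B.repr w‖ ^ 2 = ∑' q, ‖B.repr w q‖ ^ 2 := by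
    apply_mod_cast lp.norm_rpow_eq_tsum ?_ (B.repr w)
    norm_num
  have hnw : ‖f‖ = ‖w‖ := rfl
  rw [hnw, ← B.repr.norm_map w, hP]
  apply tsum_congr
  intro q
  rw [hrepr q, norm_inner_symm]
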